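/- For the Lamb-Oseen vortex, the function J(r) = r⁴ e^{-r²}(1-e^{-r²}) / (1-(1+r²)e^{-r²})² is strictly decreasing on (0,∞), i.e. J'(r) < 0 for all r > 0. -/

import Mathlib

open Real

lemma key3 : ∀ t : ℝ, 0 < t → (4 - 8*t) * Real.exp t < t^2 + 5*t + 7 := by
  intro t ht
  rcases le_or_gt (4 - 8*t) 0 with h | h
  · have := exp_pos t
    nlinarith [mul_nonpos_of_nonpos_of_nonneg h (le_of_lt (exp_pos t))]
  · have h1 : (1 - t) * Real.exp t < 1 := by
      have hlt : -t + 1 < Real.exp (-t) := add_one_lt_exp (show -t ≠ 0 by intro hh; nlinarith)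
      have he := exp_pos t
      have hm : Real.exp (-t) * Real.exp t = 1 := by rw [← Real.exp_add]; simp
      nlinarith [mul_pos (show (0:ℝ) < Real.exp (-t) - (-t+1) from by linarith) he]
    nlinarith [mul_pos h (sub_pos.2 h1), exp_pos t]

lemma neg_of_deriv (f : ℝ → ℝ) (hf : Differentiable ℝ f) (h0 : f 0 = 0)
    (hd : ∀ t : ℝ, 0 < t → deriv f t < 0) : ∀ t : ℝ, 0 < t → f t < 0 := by
  intro t ht
  have hs : StrictAntiOn f (Set.Ici 0) := by
    apply strictAntiOn_of_deriv_neg (convex_Ici 0) hf.continuous.continuousOn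
    intro x hx
    rw [interior_Ici] at hx
    exact hd x hx
  have := hs (Set.mem_Ici.2 le_rfl) (Set.mem_Ici.2 ht.le) ht
  rwa [h0] at this

lemma hexp2 (t : ℝ) : HasDerivAt (fun s : ℝ => Real.exp (2*s)) (2 * Real.exp (2*t)) t := by
  have h := ((hasDerivAt_id t).const_mul (2:ℝ)).exp
  simpa [mul_comm] using h

lemma h3_neg : ∀ t : ℝ, 0 < t →
    (4 - 8*t) * Real.exp (2*t) - (t^2 + 5*t + 7) * Real.exp t < 0 := by
  intro t ht
  have h2t : Real.exp (2*t) = Real.exp t * Real.exp t := by rw [two_mul, Real.exp_add]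
  nlinarith [key3 t ht, exp_pos t]

lemma hd2 (t : ℝ) : HasDerivAt (fun s : ℝ => (4 - 4*s) * Real.exp (2*s) - (s^2 + 3*s + 4) * Real.exp s)
    ((4 - 8*t) * Real.exp (2*t) - (t^2 + 5*t + 7) * Real.exp t) t := by
  have hp1 : HasDerivAt (fun s : ℝ => 4 - 4*s) (-4) t := by
    simpa [Pi.sub_def] using (hasDerivAt_const t (4:ℝ)).sub ((hasDerivAt_id t).const_mul (4:ℝ))
  have hp2 : HasDerivAt (fun s : ℝ => s^2 + 3*s + 4) (2*t + 3) t := by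
    have h1 := hasDerivAt_pow 2 t
    have h2 := (hasDerivAt_id t).const_mul (3:ℝ)
    simpa using (h1.add h2).add_const 4
  have h := (hp1.mul (hexp2 t)).sub (hp2.mul (Real.hasDerivAt_exp t))
  refine h.congr_deriv ?_
  ring

lemma h2_neg : ∀ t : ℝ, 0 < t →
    (4 - 4*t) * Real.exp (2*t) - (t^2 + 3*t + 4) * Real.exp t < 0 := by
  apply neg_of_deriv
  · exact fun t => (hd2 t).differentiableAt
  · simp
  · intro t ht
    rw [(hd2 t).deriv]
    exact h3_neg t ht

lemma hd1 (t : ℝ) : HasDerivAt (fun s : ℝ => (3 - 2*s) * Real.exp (2*s) - (s^2 + s + 3) * Real.exp s)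
    ((4 - 4*t) * Real.exp (2*t) - (t^2 + 3*t + 4) * Real.exp t) t := by
  have hp1 : HasDerivAt (fun s : ℝ => 3 - 2*s) (-2) t := by
    simpa [Pi.sub_def] using (hasDerivAt_const t (3:ℝ)).sub ((hasDerivAt_id t).const_mul (2:ℝ))
  have hp2 : HasDerivAt (fun s : ℝ => s^2 + s + 3) (2*t + 1) t := by
    have h1 := hasDerivAt_pow 2 t
    have h2 := hasDerivAt_id t
    simpa using (h1.add h2).add_const 3
  have h := (hp1.mul (hexp2 t)).sub (hp2.mul (Real.hasDerivAt_exp t))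
  refine h.congr_deriv ?_
  ring

lemma h1_neg : ∀ t : ℝ, 0 < t →
    (3 - 2*t) * Real.exp (2*t) - (t^2 + t + 3) * Real.exp t < 0 := by
  apply neg_of_deriv
  · exact fun t => (hd1 t).differentiableAt
  · simp
  · intro t ht
    rw [(hd1 t).deriv]
    exact h2_neg t ht

lemma hd0 (t : ℝ) : HasDerivAt (fun s : ℝ => (2 - s) * Real.exp (2*s) + (s - s^2 - 4) * Real.exp s + 2)
    ((3 - 2*t) * Real.exp (2*t) - (t^2 + t + 3) * Real.exp t) t := by
  have hp1 : HasDerivAt (fun s : ℝ => 2 - s) (-1) t := by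
    simpa [Pi.sub_def] using (hasDerivAt_const t (2:ℝ)).sub (hasDerivAt_id t)
  have hp2 : HasDerivAt (fun s : ℝ => s - s^2 - 4) (1 - 2*t) t := by
    have h1 := hasDerivAt_id t
    have h2 := hasDerivAt_pow 2 t
    simpa using (h1.sub h2).sub_const 4
  have h := ((hp1.mul (hexp2 t)).add (hp2.mul (Real.hasDerivAt_exp t))).add_const 2
  refine h.congr_deriv ?_
  ring

lemma h0_neg : ∀ t : ℝ, 0 < t →
    (2 - t) * Real.exp (2*t) + (t - t^2 - 4) * Real.exp t + 2 < 0 := by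
  apply neg_of_deriv
  · exact fun t => (hd0 t).differentiableAt
  · norm_num
  · intro t ht
    rw [(hd0 t).deriv]
    exact h1_neg t ht

lemma g_neg : ∀ t : ℝ, 0 < t →
    2 * Real.exp (-t)^2 + (t - t^2 - 4) * Real.exp (-t) + (2 - t) < 0 := by
  intro t ht
  have h1 : Real.exp (-t) * Real.exp t = 1 := by rw [← Real.exp_add]; simp
  have h2 : Real.exp (2*t) = Real.exp t * Real.exp t := by rw [two_mul, Real.exp_add]
  have hexpand : Real.exp (-t)^2 * ((2 - t) * Real.exp (2*t) + (t - t^2 - 4) * Real.exp t + 2)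
      = 2 * Real.exp (-t)^2 + (t - t^2 - 4) * Real.exp (-t) + (2 - t) := by
    rw [h2]
    linear_combination ((2 - t) * (Real.exp (-t) * Real.exp t + 1)
      + (t - t^2 - 4) * Real.exp (-t)) * h1
  rw [← hexpand]
  exact mul_neg_of_pos_of_neg (by positivity) (h0_neg t ht)

theorem lamb_oseen_J_strict_anti :
    (∀ r : ℝ, 0 < r →
      deriv (fun x : ℝ =>
        x ^ 4 * Real.exp (-x ^ 2) * (1 - Real.exp (-x ^ 2)) /
          (1 - (1 + x ^ 2) * Real.exp (-x ^ 2)) ^ 2) r < 0) ∧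
    StrictAntiOn (fun x : ℝ =>
        x ^ 4 * Real.exp (-x ^ 2) * (1 - Real.exp (-x ^ 2)) /
          (1 - (1 + x ^ 2) * Real.exp (-x ^ 2)) ^ 2) (Set.Ioi 0) := by
  have hDpos : ∀ r : ℝ, 0 < r → 0 < 1 - (1 + r^2) * Real.exp (-r^2) := by
    intro r hr
    have h1 : r^2 + 1 < Real.exp (r^2) := add_one_lt_exp (by positivity)
    have h2 : Real.exp (-r^2) * Real.exp (r^2) = 1 := by rw [← Real.exp_add]; simp
    nlinarith [mul_pos (exp_pos (-r^2)) (show (0:ℝ) < Real.exp (r^2) - (r^2+1) from by linarith)]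
  have hderiv : ∀ r : ℝ, 0 < r →
      deriv (fun x : ℝ =>
        x ^ 4 * Real.exp (-x ^ 2) * (1 - Real.exp (-x ^ 2)) /
          (1 - (1 + x ^ 2) * Real.exp (-x ^ 2)) ^ 2) r < 0 := by
    intro r hr
    set u : ℝ := Real.exp (-r^2) with hu
    have hupos : 0 < u := exp_pos _
    set D : ℝ := 1 - (1 + r^2) * u with hD
    have hD0 : 0 < D := hDpos r hr
    have hue : HasDerivAt (fun x : ℝ => Real.exp (-x^2)) (-(2*r) * u) r := by
      have h := ((hasDerivAt_pow 2 r).neg).exp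
      simpa [hu, mul_comm] using h
    have hN : HasDerivAt (fun x : ℝ => x^4 * Real.exp (-x^2) * (1 - Real.exp (-x^2)))
        ((4*r^3 * u + r^4 * (-(2*r) * u)) * (1 - u) + r^4 * u * (2*r*u)) r := by
      have h := ((hasDerivAt_pow 4 r).mul hue).mul ((hasDerivAt_const r (1:ℝ)).sub hue)
      refine h.congr_deriv ?_
      simp only [Pi.mul_apply, Pi.sub_apply, Pi.add_apply, ← hu]
      push_cast
      ring
    have hDin : HasDerivAt (fun x : ℝ => 1 - (1 + x^2) * Real.exp (-x^2)) (2*r^3 * u) r := by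
      have h := (hasDerivAt_const r (1:ℝ)).sub
        (((hasDerivAt_const r (1:ℝ)).add (hasDerivAt_pow 2 r)).mul hue)
      refine h.congr_deriv ?_
      simp only [Pi.mul_apply, Pi.sub_apply, Pi.add_apply, ← hu]
      push_cast
      ring
    have hDe : HasDerivAt (fun x : ℝ => (1 - (1 + x^2) * Real.exp (-x^2))^2)
        (2 * D^1 * (2*r^3 * u)) r := by
      have h := hDin.pow 2
      refine h.congr_deriv ?_
      rw [hD, hu]; push_cast; ring
    have hJ : HasDerivAt (fun x : ℝ =>
          x ^ 4 * Real.exp (-x ^ 2) * (1 - Real.exp (-x ^ 2)) /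
            (1 - (1 + x ^ 2) * Real.exp (-x ^ 2)) ^ 2) _ r := hN.div hDe (by positivity : (D:ℝ)^2 ≠ 0)
    rw [hJ.deriv]
    have hg := g_neg (r^2) (by positivity)
    have hnum : (4*r^3 * u + r^4 * (-(2*r) * u)) * (1 - u) * D^2
        - r^4 * u * (1 - u) * (2 * D^1 * (2*r^3 * u))
        + r^4 * u * (2*r*u) * D^2
        = (2*r^3*u*D) * (2*u^2 + (r^2 - (r^2)^2 - 4)*u + (2 - r^2)) := by
      rw [hD]; ring
    have hnum' : (4*r^3 * u + r^4 * (-(2*r) * u)) * (1 - u) * D^2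
        - r^4 * u * (1 - u) * (2 * D^1 * (2*r^3 * u))
        + r^4 * u * (2*r*u) * D^2 < 0 := by
      rw [hnum]
      exact mul_neg_of_pos_of_neg (by positivity) hg
    apply div_neg_of_neg_of_pos
    · refine lt_of_eq_of_lt ?_ hnum'
      rw [← hu, ← hD]
      ring
    · positivity
  refine ⟨hderiv, ?_⟩
  apply strictAntiOn_of_deriv_neg (convex_Ioi 0)
  · apply ContinuousOn.div
    · fun_prop
    · fun_prop
    · intro x hx
      have := hDpos x hx
      positivity
  · intro x hx
    rw [interior_Ioi] at hx
    exact hderiv x hx
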